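/- Let V be a compact Hausdorff space with a finite Borel measure ω positive on open sets, let A : V × V → ℝ be continuous, and let U ⊆ V be a finite set. Then for every ε > 0 there exists an ω-partition P of V that separates U (each part contains at most one point of U) and over which A varies less than ε on each product X × Y of parts. -/

import Mathlib

open MeasureTheory Uniformity

/-- An `ω`-partition: a finite partition of `V` into measurable sets of positive measure. -/
def IsOmegaPartition {V : Type*} [MeasurableSpace V] (ω : Measure V)
    (P : Finset (Set V)) : Prop :=
  (∀ X ∈ P, MeasurableSet X) ∧ (∀ X ∈ P, 0 < ω X) ∧
    (∀ X ∈ P, ∀ Y ∈ P, X ≠ Y → Disjoint X Y) ∧ (⋃ X ∈ P, X) = Set.univ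

/-- for any continuous kernel `A` on a compact Hausdorff space with a
finite Borel measure `ω` positive on open sets, any finite `U ⊆ V`, and any `ε > 0`,
there is an `ω`-partition that separates `U` and over which `A` varies less than `ε`. -/
theorem stmt_12 {V : Type*} [TopologicalSpace V] [CompactSpace V] [T2Space V]
    [MeasurableSpace V] [BorelSpace V]
    (ω : Measure V) [IsFiniteMeasure ω]
    (hpos : ∀ W : Set V, IsOpen W → W.Nonempty → 0 < ω W)
    (A : V × V → ℝ) (hAcont : Continuous A)
    (U : Finset V) (ε : ℝ) (hε : 0 < ε) :
    ∃ P : Finset (Set V), IsOmegaPartition ω P ∧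
      (∀ X ∈ P, ((U : Set V) ∩ X).Subsingleton) ∧
      (∀ X ∈ P, ∀ Y ∈ P, ∀ x ∈ X, ∀ x' ∈ X, ∀ y ∈ Y, ∀ y' ∈ Y,
        |A (x, y) - A (x', y')| < ε) := by
  classical
  rcases isEmpty_or_nonempty V with hV | hV
  · refine ⟨∅, ⟨by simp, by simp, by simp, ?_⟩, by simp, by simp⟩
    have : (Set.univ : Set V) = ∅ := Set.univ_eq_empty_iff.mpr hV
    simp [this]
  letI uV : UniformSpace V := uniformSpaceOfCompactR1
  have hA : UniformContinuous A := CompactSpace.uniformContinuous_of_continuous hAcont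
  -- entourages controlling the oscillation of A
  have hsA : (fun p : (V × V) × (V × V) => (A p.1, A p.2)) ⁻¹'
      {q : ℝ × ℝ | dist q.1 q.2 < ε / 2} ∈ 𝓤 (V × V) :=
    hA (Metric.dist_mem_uniformity (by linarith))
  obtain ⟨E₁, hE₁, E₂, hE₂, hE⟩ := entourageProd_subset hsA
  have hEA : ∀ a b a' b' : V, (a, a') ∈ E₁ → (b, b') ∈ E₂ →
      |A (a, b) - A (a', b')| < ε / 2 := by
    intro a b a' b' h1 h2
    have := hE (show ((a, b), (a', b')) ∈ entourageProd E₁ E₂ from ⟨h1, h2⟩)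
    simpa [Real.dist_eq] using this
  -- an entourage separating distinct points of U
  have hsep : ∀ u u' : V, u ≠ u' → ∃ s ∈ 𝓤 V, (u, u') ∉ s := by
    intro u u' hne
    by_contra h
    push_neg at h
    exact hne (eq_of_uniformity fun {W} hW => h W hW)
  choose! sep hsep𝓤 hsepnot using hsep
  set E₀ : Set (V × V) :=
    ⋂ p ∈ (U ×ˢ U : Finset (V × V)), if p.1 = p.2 then Set.univ else sep p.1 p.2 with hE₀def
  have hE₀mem : E₀ ∈ 𝓤 V := by
    refine (Filter.biInter_finset_mem _).mpr fun p _ => ?_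
    split_ifs with h
    · exact Filter.univ_mem
    · exact hsep𝓤 p.1 p.2 h
  have hE₀ : ∀ u ∈ U, ∀ u' ∈ U, u ≠ u' → (u, u') ∉ E₀ := by
    intro u hu u' hu' hne hmem
    have : (u, u') ∈ (if u = u' then Set.univ else sep u u') := by
      have := Set.mem_iInter₂.mp hmem (u, u') (Finset.mem_product.mpr ⟨hu, hu'⟩)
      exact this
    rw [if_neg hne] at this
    exact hsepnot u u' hne this
  -- a small symmetric open entourage D
  set s₀ : Set (V × V) := E₁ ∩ E₂ ∩ E₀ with hs₀def
  have hs₀ : s₀ ∈ 𝓤 V := Filter.inter_mem (Filter.inter_mem hE₁ hE₂) hE₀mem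
  obtain ⟨t₁, ht₁, ht₁s, ht₁c⟩ := comp_symm_mem_uniformity_sets hs₀
  obtain ⟨t₂, ht₂, ht₂s, ht₂c⟩ := comp_symm_mem_uniformity_sets ht₁
  obtain ⟨t₃, ht₃, ht₃s, ht₃c⟩ := comp_symm_mem_uniformity_sets ht₂
  obtain ⟨D, ⟨hD𝓤, hDopen, hDsymm⟩, hDt₃⟩ :=
    uniformity_hasBasis_open_symmetric.mem_iff.mp ht₃
  have hDrefl : ∀ x : V, (x, x) ∈ D := fun x => refl_mem_uniformity hD𝓤
  -- chains of length ≤ 6 in D land in s₀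
  have hchain6 : ∀ a b c d e f g : V, (a, b) ∈ D → (b, c) ∈ D → (c, d) ∈ D →
      (d, e) ∈ D → (e, f) ∈ D → (f, g) ∈ D → (a, g) ∈ s₀ := by
    intro a b c d e f g h1 h2 h3 h4 h5 h6
    have hac : (a, c) ∈ t₂ := ht₃c ⟨b, hDt₃ h1, hDt₃ h2⟩
    have hce : (c, e) ∈ t₂ := ht₃c ⟨d, hDt₃ h3, hDt₃ h4⟩
    have heg : (e, g) ∈ t₂ := ht₃c ⟨f, hDt₃ h5, hDt₃ h6⟩
    have hae : (a, e) ∈ t₁ := ht₂c ⟨c, hac, hce⟩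
    have heg' : (e, g) ∈ t₁ := ht₂c ⟨g, heg, refl_mem_uniformity ht₂⟩
    exact ht₁c ⟨e, hae, heg'⟩
  have hchain3 : ∀ a b c d : V, (a, b) ∈ D → (b, c) ∈ D → (c, d) ∈ D → (a, d) ∈ s₀ :=
    fun a b c d h1 h2 h3 =>
      hchain6 a b c d d d d h1 h2 h3 (hDrefl d) (hDrefl d) (hDrefl d)
  -- finite cover by D-balls
  have hcov : (Set.univ : Set V) ⊆ ⋃ x : V, UniformSpace.ball x D := fun x _ =>
    Set.mem_iUnion.mpr ⟨x, hDrefl x⟩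
  obtain ⟨t, ht⟩ := isCompact_univ.elim_finite_subcover (fun x : V => UniformSpace.ball x D)
    (fun x => UniformSpace.isOpen_ball x hDopen) hcov
  -- the list of centers
  set L : List V := t.toList with hLdef
  set n : ℕ := L.length with hndef
  set c : ℕ → V := fun k => L.getD k (Classical.arbitrary V) with hcdef
  set W : ℕ → Set V := fun k => if k < n then UniformSpace.ball (c k) D else ∅ with hWdef
  have hWopen : ∀ k, IsOpen (W k) := by
    intro k
    simp only [hWdef]
    split_ifs
    · exact UniformSpace.isOpen_ball _ hDopen
    · exact isOpen_empty
  have hWball : ∀ k, k < n → W k = UniformSpace.ball (c k) D := by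
    intro k hk; simp [hWdef, hk]
  have hWcover : (⋃ k, W k) = Set.univ := by
    apply Set.eq_univ_of_univ_subset
    intro v _
    obtain ⟨x, hxmem, hxv⟩ := Set.mem_iUnion₂.mp (ht (Set.mem_univ v))
    have hxL : x ∈ L := by rwa [hLdef, Finset.mem_toList]
    obtain ⟨k, hk, hkx⟩ := List.mem_iff_getElem.mp hxL
    refine Set.mem_iUnion.mpr ⟨k, ?_⟩
    have hc : c k = x := by
      simp [hcdef, List.getD_eq_getElem?_getD, List.getElem?_eq_getElem hk, hkx]
    rw [hWball k hk, hc]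
    exact hxv
  -- the disjointified pieces
  set X : ℕ → Set V := disjointed W with hXdef
  have hXW : ∀ k, X k ⊆ W k := fun k => disjointed_le W k
  have hXmeas : ∀ k, MeasurableSet (X k) :=
    MeasurableSet.disjointed fun k => (hWopen k).measurableSet
  have hXdisj : Pairwise (Function.onFun Disjoint X) := disjoint_disjointed W
  have hXcover : (⋃ k, X k) = Set.univ := by
    have := iSup_disjointed W
    rw [hXdef]
    rw [← hWcover]
    exact this
  have hXempty : ∀ k, n ≤ k → X k = ∅ := by
    intro k hk
    have : W k = ∅ := by simp [hWdef, Nat.not_lt.mpr hk]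
    exact Set.subset_eq_empty (hXW k) this
  have hXlt : ∀ k, (X k).Nonempty → k < n := by
    intro k hk
    by_contra h
    rw [hXempty k (Nat.not_lt.mp h)] at hk
    exact Set.not_nonempty_empty hk
  -- reassignment of null pieces
  have hFex : ∀ k, (X k).Nonempty → ∃ j, 0 < ω (X j ∩ W k) := by
    intro k hk
    have hkn : k < n := hXlt k hk
    have hWne : (W k).Nonempty := hk.mono (hXW k)
    have hWpos : 0 < ω (W k) := hpos _ (hWopen k) hWne
    by_contra h
    push_neg at h
    have hzero : ∀ j, ω (X j ∩ W k) = 0 := fun j => le_antisymm (h j) zero_le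
    have hsub : W k ⊆ ⋃ j, X j ∩ W k := by
      intro v hv
      obtain ⟨j, hj⟩ := Set.mem_iUnion.mp (hXcover ▸ Set.mem_univ v :
        v ∈ ⋃ j, X j)
      exact Set.mem_iUnion.mpr ⟨j, hj, hv⟩
    have : ω (W k) ≤ 0 := by
      calc ω (W k) ≤ ω (⋃ j, X j ∩ W k) := measure_mono hsub
        _ ≤ ∑' j, ω (X j ∩ W k) := measure_iUnion_le _
        _ = 0 := by simp [hzero]
    exact absurd this (not_le.mpr hWpos)
  set F : ℕ → ℕ := fun k =>
    if hk : (X k).Nonempty then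
      (if 0 < ω (X k) then k else (hFex k hk).choose)
    else k with hFdef
  have hFprop : ∀ k, (X k).Nonempty → 0 < ω (X (F k)) ∧ (X (F k) ∩ W k).Nonempty := by
    intro k hk
    simp only [hFdef, dif_pos hk]
    split_ifs with hω
    · exact ⟨hω, hk.mono fun v hv => ⟨hv, hXW k hv⟩⟩
    · have hch := (hFex k hk).choose_spec
      refine ⟨lt_of_lt_of_le hch (measure_mono Set.inter_subset_left), ?_⟩
      exact nonempty_of_measure_ne_zero hch.ne'
  have hFpos : ∀ k, 0 < ω (X k) → F k = k := by
    intro k hk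
    have hne : (X k).Nonempty := nonempty_of_measure_ne_zero hk.ne'
    simp [hFdef, dif_pos hne, if_pos hk]
  -- the final parts
  set Y : ℕ → Set V := fun j => ⋃ (k : ℕ) (_ : F k = j), X k with hYdef
  set S : Finset ℕ := (Finset.range n).filter fun j => 0 < ω (X j) with hSdef
  have hSmem : ∀ j, j ∈ S ↔ j < n ∧ 0 < ω (X j) := by
    intro j; simp [hSdef]
  have hXY : ∀ j, 0 < ω (X j) → X j ⊆ Y j := by
    intro j hj v hv
    exact Set.mem_iUnion₂.mpr ⟨j, hFpos j hj, hv⟩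
  -- the key geometric property of the parts
  have hchainY : ∀ j ∈ S, ∀ x ∈ Y j, ∃ a b : V, (c j, a) ∈ D ∧ (a, b) ∈ D ∧ (b, x) ∈ D := by
    intro j hjS x hx
    obtain ⟨k, hFk, hxk⟩ := Set.mem_iUnion₂.mp hx
    have hkne : (X k).Nonempty := ⟨x, hxk⟩
    have hkn : k < n := hXlt k hkne
    obtain ⟨-, w, hw⟩ := hFprop k hkne
    rw [hFk] at hw
    have hjn : j < n := ((hSmem j).mp hjS).1
    have hcw : (c j, w) ∈ D := by
      have : w ∈ W j := hXW j hw.1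
      rwa [hWball j hjn] at this
    have hckw : (c k, w) ∈ D := by
      have := hw.2; rwa [hWball k hkn] at this
    have hwck : (w, c k) ∈ D := hDsymm.symm _ _ hckw
    have hckx : (c k, x) ∈ D := by
      have : x ∈ W k := hXW k hxk
      rwa [hWball k hkn] at this
    exact ⟨w, c k, hcw, hwck, hckx⟩
  have hnear : ∀ j ∈ S, ∀ x ∈ Y j, (c j, x) ∈ s₀ := by
    intro j hj x hx
    obtain ⟨a, b, h1, h2, h3⟩ := hchainY j hj x hx
    exact hchain3 _ a b _ h1 h2 h3
  -- assembling the partition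
  refine ⟨S.image Y, ⟨?_, ?_, ?_, ?_⟩, ?_, ?_⟩
  · -- measurability
    intro Z hZ
    obtain ⟨j, _, rfl⟩ := Finset.mem_image.mp hZ
    exact MeasurableSet.iUnion fun k => MeasurableSet.iUnion fun _ => hXmeas k
  · -- positivity
    intro Z hZ
    obtain ⟨j, hjS, rfl⟩ := Finset.mem_image.mp hZ
    have hj := ((hSmem j).mp hjS).2
    exact lt_of_lt_of_le hj (measure_mono (hXY j hj))
  · -- disjointness
    intro Z hZ Z' hZ' hne
    obtain ⟨j, hjS, rfl⟩ := Finset.mem_image.mp hZ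
    obtain ⟨j', hjS', rfl⟩ := Finset.mem_image.mp hZ'
    have hjj : j ≠ j' := fun h => hne (by rw [h])
    rw [Set.disjoint_left]
    intro v hv hv'
    obtain ⟨k, hFk, hvk⟩ := Set.mem_iUnion₂.mp hv
    obtain ⟨k', hFk', hvk'⟩ := Set.mem_iUnion₂.mp hv'
    have hkk : k ≠ k' := fun h => hjj (by rw [← hFk, ← hFk', h])
    exact Set.disjoint_left.mp (hXdisj hkk) hvk hvk'
  · -- covering
    apply Set.eq_univ_of_univ_subset
    intro v _
    obtain ⟨k, hvk⟩ := Set.mem_iUnion.mp (hXcover ▸ Set.mem_univ v : v ∈ ⋃ k, X k)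
    have hkne : (X k).Nonempty := ⟨v, hvk⟩
    have hpos' := (hFprop k hkne).1
    have hFkn : F k < n := hXlt (F k) (nonempty_of_measure_ne_zero hpos'.ne')
    have hFS : F k ∈ S := (hSmem (F k)).mpr ⟨hFkn, hpos'⟩
    refine Set.mem_iUnion₂.mpr ⟨Y (F k), ?_, ?_⟩
    · exact Finset.mem_image.mpr ⟨F k, hFS, rfl⟩
    · exact Set.mem_iUnion₂.mpr ⟨k, rfl, hvk⟩
  · -- separation of U
    intro Z hZ u hu u' hu'
    obtain ⟨j, hjS, rfl⟩ := Finset.mem_image.mp hZ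
    by_contra hne
    obtain ⟨a, b, h1, h2, h3⟩ := hchainY j hjS u hu.2
    obtain ⟨a', b', h1', h2', h3'⟩ := hchainY j hjS u' hu'.2
    have hub : (u, b) ∈ D := hDsymm.symm _ _ h3
    have hba : (b, a) ∈ D := hDsymm.symm _ _ h2
    have hac : (a, c j) ∈ D := hDsymm.symm _ _ h1
    have : (u, u') ∈ s₀ := hchain6 u b a (c j) a' b' u' hub hba hac h1' h2' h3'
    exact hE₀ u hu.1 u' hu'.1 hne this.2
  · -- oscillation
    intro Z hZ Z' hZ' x hx x' hx' y hy y' hy'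
    obtain ⟨j, hjS, rfl⟩ := Finset.mem_image.mp hZ
    obtain ⟨j', hjS', rfl⟩ := Finset.mem_image.mp hZ'
    have hx1 : (c j, x) ∈ E₁ := ((hnear j hjS x hx).1).1
    have hx1' : (c j, x') ∈ E₁ := ((hnear j hjS x' hx').1).1
    have hy2 : (c j', y) ∈ E₂ := ((hnear j' hjS' y hy).1).2
    have hy2' : (c j', y') ∈ E₂ := ((hnear j' hjS' y' hy').1).2
    have d1 : |A (c j, c j') - A (x, y)| < ε / 2 := hEA (c j) (c j') x y hx1 hy2
    have d2 : |A (c j, c j') - A (x', y')| < ε / 2 := hEA (c j) (c j') x' y' hx1' hy2'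
    calc |A (x, y) - A (x', y')|
        ≤ |A (x, y) - A (c j, c j')| + |A (c j, c j') - A (x', y')| :=
          abs_sub_le _ _ _
      _ = |A (c j, c j') - A (x, y)| + |A (c j, c j') - A (x', y')| := by
          rw [abs_sub_comm]
      _ < ε / 2 + ε / 2 := add_lt_add d1 d2
      _ = ε := by ring
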